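/- On a cycle $C_n$ with distinct identifiers, any correct deterministic leader election algorithm has a node with running time at least $n/4$. Formally: there is no function $f$ (mapping a radius-$k$ labelled view and the value $n$ to a decision) that elects exactly one leader on every identifier assignment while every node decides based on a view of radius less than $n/4$. -/
import Mathlib

private lemma zmod_val_int_aux (n : ℕ) [NeZero n] (j : ℤ) (h0 : 0 ≤ j) (h1 : j < n) :
    ((j : ZMod n)).val = j.toNat := by
  lift j to ℕ using h0
  rw [Int.cast_natCast, ZMod.val_natCast_of_lt (by exact_mod_cast h1), Int.toNat_natCast]

/-- Deterministic leader election on the `n`-cycle requires some node to have running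
time at least `n/4`.  There is no local algorithm `out` (mapping an identifier
assignment, drawn from the polynomial space `Fin (n^3)`, and a node to a Boolean
output) which depends only on the radius-`k` view for some `k < n/4` and elects exactly
one leader on every injective identifier assignment. -/
theorem stmt_11 (n : ℕ) (hn : 3 ≤ n) :
    ¬ ∃ (k : ℕ) (out : (ZMod n → Fin (n ^ 3)) → ZMod n → Bool),
      k < n / 4 ∧
      (∀ (I I' : ZMod n → Fin (n ^ 3)) (v v' : ZMod n),
        (∀ j : ℤ, |j| ≤ (k : ℤ) → I (v + (j : ZMod n)) = I' (v' + (j : ZMod n))) →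
        out I v = out I' v') ∧
      (∀ I : ZMod n → Fin (n ^ 3), Function.Injective I →
        ∃! v : ZMod n, out I v = true) := by
  rintro ⟨k, out, hk, hloc, helect⟩
  haveI : NeZero n := ⟨by omega⟩
  have hk4 : 4 * k + 4 ≤ n := by omega
  set m : ℕ := n / 2 with hm
  have hm1 : 2 * k + 2 ≤ m := by omega
  have hm2 : m + 2 * k + 2 ≤ n := by omega
  have hm4 : m < n := by omega
  have h3n : 3 * n ≤ n ^ 3 := by
    have : n ^ 3 = n * n * n := by ring
    nlinarith
  set I : ZMod n → Fin (n ^ 3) := fun x => ⟨x.val, by have := ZMod.val_lt x; omega⟩ with hIdef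
  set I' : ZMod n → Fin (n ^ 3) :=
    fun x => ⟨n + x.val, by have := ZMod.val_lt x; omega⟩ with hI'def
  have hIinj : Function.Injective I := by
    intro x y h
    exact ZMod.val_injective n (by simpa [hIdef, Fin.ext_iff] using h)
  have hI'inj : Function.Injective I' := by
    intro x y h
    apply ZMod.val_injective n
    have : n + x.val = n + y.val := by simpa [hI'def, Fin.ext_iff] using h
    omega
  obtain ⟨v, hv, -⟩ := helect I hIinj
  obtain ⟨v', hv', -⟩ := helect I' hI'inj
  set mz : ZMod n := ((m : ℕ) : ZMod n) with hmz
  set J : ZMod n → Fin (n ^ 3) := fun x =>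
    if x.val ≤ k ∨ n ≤ x.val + k then I (v + x)
    else if (x - mz).val ≤ k ∨ n ≤ (x - mz).val + k then I' (v' + (x - mz))
    else ⟨2 * n + x.val, by have := ZMod.val_lt x; omega⟩ with hJdef
  -- Claim A : small offsets lie in the window around 0
  have hA : ∀ j : ℤ, |j| ≤ (k : ℤ) → ((j : ZMod n).val ≤ k ∨ n ≤ (j : ZMod n).val + k) := by
    intro j hj
    rw [abs_le] at hj
    rcases le_or_gt 0 j with h0 | h0
    · left
      rw [zmod_val_int_aux n j h0 (by omega)]
      omega
    · right
      have e : (j : ZMod n) = ((j + n : ℤ) : ZMod n) := by push_cast; simp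
      rw [e, zmod_val_int_aux n (j + n) (by omega) (by omega)]
      omega
  -- J agrees with I around 0
  have hJ0 : ∀ j : ℤ, |j| ≤ (k : ℤ) → J ((0 : ZMod n) + (j : ZMod n)) = I (v + (j : ZMod n)) := by
    intro j hj
    simp only [hJdef, zero_add]
    rw [if_pos (hA j hj)]
  -- J agrees with I' around mz
  have hJm : ∀ j : ℤ, |j| ≤ (k : ℤ) → J (mz + (j : ZMod n)) = I' (v' + (j : ZMod n)) := by
    intro j hj
    have hj' := hj
    rw [abs_le] at hj'
    have e : mz + (j : ZMod n) = ((((m : ℤ) + j : ℤ)) : ZMod n) := by push_cast; ring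
    have hval : (mz + (j : ZMod n)).val = ((m : ℤ) + j).toNat := by
      rw [e, zmod_val_int_aux n _ (by omega) (by omega)]
    have hnot : ¬ ((mz + (j : ZMod n)).val ≤ k ∨ n ≤ (mz + (j : ZMod n)).val + k) := by
      rw [hval]; omega
    have hsub : (mz + (j : ZMod n)) - mz = (j : ZMod n) := by ring
    simp only [hJdef]
    rw [if_neg hnot, hsub, if_pos (hA j hj)]
  -- J is injective
  have hJinj : Function.Injective J := by
    intro x y hxy
    have hvx := ZMod.val_lt (v + x)
    have hvy := ZMod.val_lt (v + y)
    have hvx' := ZMod.val_lt (v' + (x - mz))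
    have hvy' := ZMod.val_lt (v' + (y - mz))
    simp only [hJdef, hIdef, hI'def] at hxy
    split_ifs at hxy
    all_goals simp only [Fin.mk.injEq] at hxy
    all_goals
      first
      | (exfalso; omega)
      | exact add_left_cancel (ZMod.val_injective n hxy)
      | exact sub_left_inj.mp (add_left_cancel (ZMod.val_injective n
          (show (v' + (x - mz)).val = (v' + (y - mz)).val by omega)))
      | exact ZMod.val_injective n (show x.val = y.val by omega)
  obtain ⟨w, -, hw⟩ := helect J hJinj
  have h0 : out J 0 = true := by rw [hloc J I 0 v hJ0]; exact hv
  have hmzt : out J mz = true := by rw [hloc J I' mz v' hJm]; exact hv'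
  have heq : (0 : ZMod n) = mz := (hw 0 h0).trans (hw mz hmzt).symm
  have hval0 : (0 : ZMod n).val = mz.val := by rw [heq]
  rw [ZMod.val_zero, hmz, ZMod.val_natCast_of_lt hm4] at hval0
  omega
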